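/- arXiv:1810.05468 — 4 statements merged into one kernel-verified Lean document; each statement's English description precedes it below -/
import Mathlib

section
/- The equation 5α³ - 56α² + 177α - 122 = 0 has exactly one root α_ν in the interval (0,1), and for α ∈ (0, α_ν] one has γ_{1/2}(α) ≤ γ_ν(α), while for α ∈ [α_ν, 1) one has γ_ν(α) ≤ γ_{1/2}(α). -/
theorem alpha_nu_unique_root_and_comparison :
    ∃ αν : ℝ, αν ∈ Set.Ioo (0 : ℝ) 1 ∧
      5 * αν ^ 3 - 56 * αν ^ 2 + 177 * αν - 122 = 0 ∧
      (∀ β ∈ Set.Ioo (0 : ℝ) 1, 5 * β ^ 3 - 56 * β ^ 2 + 177 * β - 122 = 0 → β = αν) ∧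
      (∀ α : ℝ, 0 < α → α ≤ αν →
        (1 - α) * (2 - α) / (4 * (5 - α)) ≤
          Real.sqrt ((1 - α) ^ 3 * (2 - α) / (α ^ 2 - 6 * α + 17))) ∧
      (∀ α : ℝ, αν ≤ α → α < 1 →
        Real.sqrt ((1 - α) ^ 3 * (2 - α) / (α ^ 2 - 6 * α + 17)) ≤
          (1 - α) * (2 - α) / (4 * (5 - α))) := by
  -- existence of a root by IVT
  have hcont : ContinuousOn (fun x : ℝ => 5 * x ^ 3 - 56 * x ^ 2 + 177 * x - 122)
      (Set.Icc (0 : ℝ) 1) := by fun_prop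
  have hIVT := intermediate_value_Ioo (by norm_num : (0:ℝ) ≤ 1) hcont
  have h0 : (0:ℝ) ∈ Set.Ioo (5 * (0:ℝ) ^ 3 - 56 * 0 ^ 2 + 177 * 0 - 122)
      (5 * (1:ℝ) ^ 3 - 56 * 1 ^ 2 + 177 * 1 - 122) := by norm_num
  obtain ⟨αν, hmem, hroot⟩ := hIVT h0
  obtain ⟨hν0, hν1⟩ := hmem
  simp only at hroot
  refine ⟨αν, ⟨hν0, hν1⟩, hroot, ?_, ?_, ?_⟩
  · -- uniqueness
    rintro β ⟨hβ0, hβ1⟩ hβ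
    have hfac : (β - αν) * (5 * (β ^ 2 + β * αν + αν ^ 2) - 56 * (β + αν) + 177) = 0 := by
      linear_combination hβ - hroot
    have hC : 0 < 5 * (β ^ 2 + β * αν + αν ^ 2) - 56 * (β + αν) + 177 := by
      nlinarith [sq_nonneg β, sq_nonneg αν, mul_pos hβ0 hν0]
    have := mul_eq_zero.mp hfac
    rcases this with h | h
    · linarith
    · linarith
  · -- α ≤ αν case
    intro α hα0 hαle
    have hα1 : α < 1 := lt_of_le_of_lt hαle hν1
    have hC : 0 < 5 * (α ^ 2 + α * αν + αν ^ 2) - 56 * (α + αν) + 177 := by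
      nlinarith [sq_nonneg α, sq_nonneg αν, mul_pos hα0 hν0]
    have hid : 5 * α ^ 3 - 56 * α ^ 2 + 177 * α - 122
        = (α - αν) * (5 * (α ^ 2 + α * αν + αν ^ 2) - 56 * (α + αν) + 177) := by
      linear_combination hroot
    have hp : 5 * α ^ 3 - 56 * α ^ 2 + 177 * α - 122 ≤ 0 := by
      rw [hid]
      exact mul_nonpos_of_nonpos_of_nonneg (by linarith) hC.le
    have hd1 : 0 < 4 * (5 - α) := by linarith
    have hd2 : 0 < α ^ 2 - 6 * α + 17 := by nlinarith [sq_nonneg (α - 3)]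
    have ha : 0 ≤ (1 - α) * (2 - α) / (4 * (5 - α)) := div_nonneg (mul_nonneg (by linarith) (by linarith)) hd1.le
    rw [show (1 - α) * (2 - α) / (4 * (5 - α))
        = Real.sqrt (((1 - α) * (2 - α) / (4 * (5 - α))) ^ 2) from
        (Real.sqrt_sq ha).symm]
    apply Real.sqrt_le_sqrt
    rw [div_pow, div_le_div_iff₀ (by positivity) hd2]
    nlinarith [mul_nonneg (mul_nonneg (sq_nonneg (1 - α)) (by linarith : (0:ℝ) ≤ 2 - α))
      (by linarith : 0 ≤ -(5 * α ^ 3 - 56 * α ^ 2 + 177 * α - 122))]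
  · -- αν ≤ α case
    intro α hαle hα1
    have hα0 : 0 < α := lt_of_lt_of_le hν0 hαle
    have hC : 0 < 5 * (α ^ 2 + α * αν + αν ^ 2) - 56 * (α + αν) + 177 := by
      nlinarith [sq_nonneg α, sq_nonneg αν, mul_pos hα0 hν0]
    have hid : 5 * α ^ 3 - 56 * α ^ 2 + 177 * α - 122
        = (α - αν) * (5 * (α ^ 2 + α * αν + αν ^ 2) - 56 * (α + αν) + 177) := by
      linear_combination hroot
    have hp : 0 ≤ 5 * α ^ 3 - 56 * α ^ 2 + 177 * α - 122 := by
      rw [hid]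
      exact mul_nonneg (by linarith) hC.le
    have hd1 : 0 < 4 * (5 - α) := by linarith
    have hd2 : 0 < α ^ 2 - 6 * α + 17 := by nlinarith [sq_nonneg (α - 3)]
    have ha : 0 ≤ (1 - α) * (2 - α) / (4 * (5 - α)) := div_nonneg (mul_nonneg (by linarith) (by linarith)) hd1.le
    rw [show (1 - α) * (2 - α) / (4 * (5 - α))
        = Real.sqrt (((1 - α) * (2 - α) / (4 * (5 - α))) ^ 2) from
        (Real.sqrt_sq ha).symm]
    apply Real.sqrt_le_sqrt
    rw [div_pow, div_le_div_iff₀ hd2 (by positivity)]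
    nlinarith [mul_nonneg (mul_nonneg (sq_nonneg (1 - α)) (by linarith : (0:ℝ) ≤ 2 - α)) hp]
end

section
/- For all α with 0 < α < 2/π, one has γ_⋆(α) < 1 - α, where γ_⋆(α) = (2/π)·arctan(sqrt(2/(πα) - 1)) - α·sqrt(2/(πα) - 1). -/
open Real

lemma key_ineq (u : ℝ) (hu0 : 0 < u) (hupi : u < Real.pi) :
    u - Real.sin u + Real.cos u + 1 < Real.pi := by
  rcases le_or_gt u (Real.pi - 2) with h | h
  · have hs : 0 < Real.sin u := Real.sin_pos_of_pos_of_lt_pi hu0 hupi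
    have hc : Real.cos u ≤ 1 := Real.cos_le_one u
    linarith
  · set v := Real.pi - u with hv
    have hv0 : 0 < v := by simp [hv]; linarith
    have hv2 : v < 2 := by simp only [hv]; linarith
    have hsin : Real.sin u = Real.sin v := by
      rw [hv, Real.sin_pi_sub]
    have hcos : Real.cos u = -Real.cos v := by
      rw [hv, Real.cos_pi_sub, neg_neg]
    have hsv : 0 ≤ Real.sin v := by
      apply Real.sin_nonneg_of_nonneg_of_le_pi hv0.le
      linarith [Real.two_le_pi]
    have hcv : 1 - v ^ 2 / 2 ≤ Real.cos v := Real.one_sub_sq_div_two_le_cos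
    nlinarith [mul_pos hv0 (show (0:ℝ) < 2 - v by linarith)]

theorem gamma_star_lt (α : ℝ) (h0 : 0 < α) (h1 : α < 2 / Real.pi) :
    (2 / Real.pi) * Real.arctan (Real.sqrt (2 / (Real.pi * α) - 1)) -
      α * Real.sqrt (2 / (Real.pi * α) - 1) < 1 - α := by
  have hpi : 0 < Real.pi := Real.pi_pos
  set x : ℝ := 2 / (Real.pi * α) - 1 with hxdef
  have hx : 0 < x := by
    have : α * Real.pi < 2 := by
      rw [lt_div_iff₀ hpi] at h1; linarith
    have hpa : 0 < Real.pi * α := mul_pos hpi h0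
    rw [hxdef, sub_pos, lt_div_iff₀ hpa]
    linarith
  set t : ℝ := Real.sqrt x with htdef
  have ht0 : 0 < t := Real.sqrt_pos.mpr hx
  have ht2 : t ^ 2 = x := Real.sq_sqrt hx.le
  have halpha : α = 2 / (Real.pi * (1 + t ^ 2)) := by
    rw [ht2, hxdef]
    field_simp
    ring
  set s : ℝ := Real.arctan t with hsdef
  have hs0 : 0 < s := by
    have := Real.arctan_strictMono ht0
    simpa [hsdef] using this
  have hs2 : s < Real.pi / 2 := Real.arctan_lt_pi_div_two t
  have hsq : 0 < Real.sqrt (1 + t ^ 2) := Real.sqrt_pos.mpr (by positivity)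
  have hsqsq : Real.sqrt (1 + t ^ 2) ^ 2 = 1 + t ^ 2 := Real.sq_sqrt (by positivity)
  have hcos : Real.cos s = 1 / Real.sqrt (1 + t ^ 2) := Real.cos_arctan t
  have hsin : Real.sin s = t / Real.sqrt (1 + t ^ 2) := Real.sin_arctan t
  have h1t : (0:ℝ) < 1 + t ^ 2 := by positivity
  have hsin2 : Real.sin (2 * s) = 2 * t / (1 + t ^ 2) := by
    rw [Real.sin_two_mul, hsin, hcos, ← hsqsq]
    field_simp
    rw [Real.sqrt_sq hsq.le]
  have hcos2 : Real.cos (2 * s) = (1 - t ^ 2) / (1 + t ^ 2) := by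
    rw [Real.cos_two_mul, hcos, div_pow, one_pow, hsqsq]
    field_simp
    ring
  have key := key_ineq (2 * s) (by linarith) (by linarith)
  rw [hsin2, hcos2] at key
  have key2 : (2 * s - 2 * t / (1 + t ^ 2) + (1 - t ^ 2) / (1 + t ^ 2) + 1) * (1 + t ^ 2)
      < Real.pi * (1 + t ^ 2) := mul_lt_mul_of_pos_right key h1t
  have keyeq : (2 * s - 2 * t / (1 + t ^ 2) + (1 - t ^ 2) / (1 + t ^ 2) + 1) * (1 + t ^ 2)
      = 2 * s * (1 + t ^ 2) - 2 * t + (1 - t ^ 2) + (1 + t ^ 2) := by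
    field_simp
  rw [keyeq] at key2
  have hpos : (0:ℝ) < Real.pi * (1 + t ^ 2) := by positivity
  have expand_l : ((2 / Real.pi) * s - α * t) * (Real.pi * (1 + t ^ 2))
      = 2 * s * (1 + t ^ 2) - 2 * t := by
    rw [halpha]
    field_simp
  have expand_r : (1 - α) * (Real.pi * (1 + t ^ 2)) = Real.pi * (1 + t ^ 2) - 2 := by
    rw [halpha]
    field_simp
  exact (mul_lt_mul_iff_of_pos_right hpos).mp (by rw [expand_l, expand_r]; linarith)
end

section
/- The function φ(α) = γ_⋆(α) - (1-α), where γ_⋆(α) = (2/π)·arctan(√(2/(πα)−1)) − α·√(2/(πα)−1), has derivative φ'(α) = 1 − √(2/(πα) − 1) for α ∈ (0, 2/π), attains its minimum value −1/2 at α = 1/π, and satisfies φ(α) < 0 on (0, 2/π) with lim_{α→0+} φ(α) = 0. -/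
open Real

noncomputable def phA : ℝ → ℝ := fun α =>
  (2 / Real.pi) * Real.arctan (Real.sqrt (2 / (Real.pi * α) - 1)) -
    α * Real.sqrt (2 / (Real.pi * α) - 1) - (1 - α)

lemma arctan_lt_self {s : ℝ} (hs : 0 < s) : Real.arctan s < s := by
  rcases lt_or_ge s (π / 2) with h | h
  · have h3 : Real.arctan s < Real.arctan (Real.tan s) :=
      Real.arctan_strictMono (Real.lt_tan hs h)
    rwa [Real.arctan_tan (by linarith [Real.pi_pos]) h] at h3
  · exact lt_of_lt_of_le (Real.arctan_lt_pi_div_two s) h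

lemma phA_deriv {α : ℝ} (h1 : 0 < α) (h2 : α < 2 / Real.pi) :
    HasDerivAt phA (1 - Real.sqrt (2 / (Real.pi * α) - 1)) α := by
  have hπ := Real.pi_pos
  have hπα : 0 < Real.pi * α := by positivity
  have hπα' : Real.pi * α ≠ 0 := ne_of_gt hπα
  have hu : 0 < 2 / (Real.pi * α) - 1 := by
    rw [sub_pos, lt_div_iff₀ hπα, one_mul]
    calc Real.pi * α < Real.pi * (2 / Real.pi) := by exact (mul_lt_mul_iff_right₀ hπ).2 h2
    _ = 2 := by field_simp
  set S := Real.sqrt (2 / (Real.pi * α) - 1) with hSdef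
  have hSpos : 0 < S := Real.sqrt_pos.2 hu
  have hS2 : S ^ 2 = 2 / (Real.pi * α) - 1 := Real.sq_sqrt hu.le
  -- derivative of inner function
  have hlin : HasDerivAt (fun x : ℝ => Real.pi * x) Real.pi α := by
    simpa using (hasDerivAt_id α).const_mul Real.pi
  have hinner : HasDerivAt (fun x : ℝ => 2 / (Real.pi * x) - 1)
      ((0 * (Real.pi * α) - 2 * Real.pi) / (Real.pi * α) ^ 2) α := by
    exact ((hasDerivAt_const α (2:ℝ)).div hlin hπα').sub_const 1
  have hsqrt : HasDerivAt (fun x : ℝ => Real.sqrt (2 / (Real.pi * x) - 1))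
      ((0 * (Real.pi * α) - 2 * Real.pi) / (Real.pi * α) ^ 2 / (2 * S)) α :=
    hinner.sqrt (ne_of_gt hu)
  have harctan : HasDerivAt (fun x : ℝ => Real.arctan (Real.sqrt (2 / (Real.pi * x) - 1)))
      (1 / (1 + S ^ 2) * ((0 * (Real.pi * α) - 2 * Real.pi) / (Real.pi * α) ^ 2 / (2 * S))) α :=
    hsqrt.arctan
  have hfull : HasDerivAt phA
      ((2 / Real.pi) * (1 / (1 + S ^ 2) * ((0 * (Real.pi * α) - 2 * Real.pi) / (Real.pi * α) ^ 2 / (2 * S)))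
        - (1 * S + α * ((0 * (Real.pi * α) - 2 * Real.pi) / (Real.pi * α) ^ 2 / (2 * S)))
        - (0 - 1)) α := by
    exact ((harctan.const_mul (2 / Real.pi)).sub ((hasDerivAt_id α).mul hsqrt)).sub
      ((hasDerivAt_const α (1:ℝ)).sub (hasDerivAt_id α))
  convert hfull using 1
  have h1S2 : 1 + S ^ 2 = 2 / (Real.pi * α) := by rw [hS2]; ring
  rw [h1S2]
  field_simp
  ring

lemma phA_basic {α : ℝ} (h1 : 0 < α) (h2 : α < 2 / Real.pi) :
    0 < 2 / (Real.pi * α) - 1 := by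
  have hπ := Real.pi_pos
  have hπα : 0 < Real.pi * α := by positivity
  rw [sub_pos, lt_div_iff₀ hπα, one_mul]
  calc Real.pi * α < Real.pi * (2 / Real.pi) := by exact (mul_lt_mul_iff_right₀ hπ).2 h2
  _ = 2 := by field_simp

lemma phA_val : phA (1 / Real.pi) = -(1 / 2) := by
  have hπ := Real.pi_pos
  have h1 : 2 / (Real.pi * (1 / Real.pi)) - 1 = 1 := by
    rw [mul_one_div, div_self (ne_of_gt hπ)]; norm_num
  unfold phA
  rw [h1, Real.sqrt_one, Real.arctan_one]
  field_simp
  ring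

lemma phA_neg {α : ℝ} (h1 : 0 < α) (h2 : α < 2 / Real.pi) : phA α < 0 := by
  have hπ := Real.pi_pos
  have hu := phA_basic h1 h2
  set S := Real.sqrt (2 / (Real.pi * α) - 1) with hSdef
  have hSpos : 0 < S := Real.sqrt_pos.2 hu
  have hS2 : S ^ 2 = 2 / (Real.pi * α) - 1 := Real.sq_sqrt hu.le
  have hπα : Real.pi * α ≠ 0 := by positivity
  have hα : α * (1 + S ^ 2) = 2 / Real.pi := by
    rw [hS2]; field_simp; ring
  have h1S2 : (0:ℝ) < 1 + S ^ 2 := by positivity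
  have hkey : Real.arctan S + (1 - S) / (1 + S ^ 2) < Real.pi / 2 := by
    rcases le_or_gt 1 S with hS1 | hS1
    · have hfrac : (1 - S) / (1 + S ^ 2) ≤ 0 :=
        div_nonpos_of_nonpos_of_nonneg (by linarith) h1S2.le
      linarith [Real.arctan_lt_pi_div_two S]
    · have ha := arctan_lt_self hSpos
      have hsum : S + (1 - S) / (1 + S ^ 2) ≤ 1 := by
        rw [← sub_nonneg]
        have heq : 1 - (S + (1 - S) / (1 + S ^ 2)) = (S ^ 2 - S ^ 3) / (1 + S ^ 2) := by
          field_simp; ring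
        rw [heq]
        apply div_nonneg _ h1S2.le
        nlinarith
      linarith [Real.pi_gt_three]
  have hmul := mul_lt_mul_of_pos_left hkey (by positivity : (0:ℝ) < 2 / Real.pi)
  have he : α * (1 - S) = 2 / Real.pi * ((1 - S) / (1 + S ^ 2)) := by
    rw [← hα]; field_simp
  have hone : 2 / Real.pi * (Real.pi / 2) = 1 := by field_simp
  unfold phA
  rw [← hSdef]
  nlinarith [hmul, he, hone]

lemma phA_deriv' {x : ℝ} (h1 : 0 < x) (h2 : x < 2 / Real.pi) :
    deriv phA x = 1 - Real.sqrt (2 / (Real.pi * x) - 1) :=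
  (phA_deriv h1 h2).deriv

lemma phA_min {α : ℝ} (h1 : 0 < α) (h2 : α < 2 / Real.pi) : phA (1 / Real.pi) ≤ phA α := by
  have hπ := Real.pi_pos
  have hπinv : 0 < 1 / Real.pi := by positivity
  have h12 : 1 / Real.pi < 2 / Real.pi := by
    have : 2 / Real.pi - 1 / Real.pi = 1 / Real.pi := by ring
    linarith
  rcases lt_trichotomy α (1 / Real.pi) with h | h | h
  · -- strictly decreasing on [α, 1/π]
    have hcont : ContinuousOn phA (Set.Icc α (1 / Real.pi)) := fun x hx =>
      ((phA_deriv (lt_of_lt_of_le h1 hx.1) (lt_of_le_of_lt hx.2 h12)).continuousAt).continuousWithinAt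
    have hd : ∀ x ∈ interior (Set.Icc α (1 / Real.pi)), deriv phA x < 0 := by
      intro x hx
      rw [interior_Icc] at hx
      have hx1 : 0 < x := lt_trans h1 hx.1
      have hx2 : x < 2 / Real.pi := lt_trans hx.2 h12
      rw [phA_deriv' hx1 hx2, sub_neg]
      rw [Real.lt_sqrt (by norm_num : (0:ℝ) ≤ 1)]
      have hπx : 0 < Real.pi * x := by positivity
      rw [lt_sub_iff_add_lt, lt_div_iff₀ hπx]
      calc (1 ^ 2 + 1) * (Real.pi * x) = 2 * (Real.pi * x) := by ring
      _ < 2 * (Real.pi * (1 / Real.pi)) := by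
          apply mul_lt_mul_of_pos_left _ (by norm_num : (0:ℝ) < 2)
          exact (mul_lt_mul_iff_right₀ hπ).2 hx.2
      _ = 2 := by field_simp
    have := strictAntiOn_of_deriv_neg (convex_Icc _ _) hcont hd
      (Set.mem_Icc.2 ⟨le_refl _, h.le⟩) (Set.mem_Icc.2 ⟨h.le, le_refl _⟩) h
    linarith
  · rw [h]
  · -- strictly increasing on [1/π, α]
    have hcont : ContinuousOn phA (Set.Icc (1 / Real.pi) α) := fun x hx =>
      ((phA_deriv (lt_of_lt_of_le hπinv hx.1) (lt_of_le_of_lt hx.2 h2)).continuousAt).continuousWithinAt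
    have hd : ∀ x ∈ interior (Set.Icc (1 / Real.pi) α), 0 < deriv phA x := by
      intro x hx
      rw [interior_Icc] at hx
      have hx1 : 0 < x := lt_trans hπinv hx.1
      have hx2 : x < 2 / Real.pi := lt_trans hx.2 h2
      rw [phA_deriv' hx1 hx2, sub_pos]
      rw [Real.sqrt_lt' (by norm_num : (0:ℝ) < 1)]
      have hπx : 0 < Real.pi * x := by positivity
      rw [sub_lt_iff_lt_add, div_lt_iff₀ hπx]
      have h1x : 1 / Real.pi < x := hx.1
      calc (2:ℝ) = 2 * (Real.pi * (1 / Real.pi)) := by field_simp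
      _ < 2 * (Real.pi * x) := by
          apply mul_lt_mul_of_pos_left _ (by norm_num : (0:ℝ) < 2)
          exact (mul_lt_mul_iff_right₀ hπ).2 hx.1
      _ = (1 ^ 2 + 1) * (Real.pi * x) := by ring
    have := strictMonoOn_of_deriv_pos (convex_Icc _ _) hcont hd
      (Set.mem_Icc.2 ⟨le_refl _, h.le⟩) (Set.mem_Icc.2 ⟨h.le, le_refl _⟩) h
    linarith

lemma phA_lim : Filter.Tendsto phA (nhdsWithin 0 (Set.Ioi 0)) (nhds 0) := by
  have hπ := Real.pi_pos
  have hsq : Filter.Tendsto Real.sqrt Filter.atTop Filter.atTop := by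
    apply Filter.tendsto_atTop_atTop.2
    intro b
    refine ⟨b ^ 2, fun a ha => ?_⟩
    calc b ≤ |b| := le_abs_self b
    _ = Real.sqrt (b ^ 2) := (Real.sqrt_sq_eq_abs b).symm
    _ ≤ Real.sqrt a := Real.sqrt_le_sqrt ha
  have h1 : Filter.Tendsto (fun α : ℝ => 2 / (Real.pi * α) - 1) (nhdsWithin 0 (Set.Ioi 0))
      Filter.atTop := by
    have heq : (fun α : ℝ => 2 / (Real.pi * α) - 1) = fun α : ℝ => (2 / Real.pi) * α⁻¹ - 1 := by
      funext α
      ring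
    rw [heq]
    exact Filter.tendsto_atTop_add_const_right _ (-1)
      (tendsto_inv_nhdsGT_zero.const_mul_atTop (by positivity))
  have h2 : Filter.Tendsto
      (fun α : ℝ => (2 / Real.pi) * Real.arctan (Real.sqrt (2 / (Real.pi * α) - 1)))
      (nhdsWithin 0 (Set.Ioi 0)) (nhds ((2 / Real.pi) * (Real.pi / 2))) := by
    have harc : Filter.Tendsto (fun α : ℝ => Real.arctan (Real.sqrt (2 / (Real.pi * α) - 1)))
        (nhdsWithin 0 (Set.Ioi 0)) (nhds (Real.pi / 2)) :=
      (Real.tendsto_arctan_atTop.mono_right nhdsWithin_le_nhds).comp (hsq.comp h1)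
    exact harc.const_mul _
  have h3 : Filter.Tendsto (fun α : ℝ => α * Real.sqrt (2 / (Real.pi * α) - 1))
      (nhdsWithin 0 (Set.Ioi 0)) (nhds 0) := by
    have hc : Continuous (fun α : ℝ => Real.sqrt (2 * α / Real.pi - α ^ 2)) :=
      Real.continuous_sqrt.comp (by continuity)
    have hcont : Filter.Tendsto (fun α : ℝ => Real.sqrt (2 * α / Real.pi - α ^ 2))
        (nhdsWithin 0 (Set.Ioi 0)) (nhds 0) := by
      have h0 := (hc.tendsto 0).mono_left (nhdsWithin_le_nhds (s := Set.Ioi 0))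
      simpa using h0
    apply hcont.congr'
    filter_upwards [self_mem_nhdsWithin] with α hα
    have hα0 : (0:ℝ) < α := hα
    rw [show 2 * α / Real.pi - α ^ 2 = α ^ 2 * (2 / (Real.pi * α) - 1) by
        field_simp,
      Real.sqrt_mul (sq_nonneg α), Real.sqrt_sq hα0.le]
  have h4 : Filter.Tendsto (fun α : ℝ => (1:ℝ) - α) (nhdsWithin 0 (Set.Ioi 0))
      (nhds (1 - 0)) :=
    ((continuous_const.sub continuous_id).tendsto 0).mono_left nhdsWithin_le_nhds
  have hfin := (h2.sub h3).sub h4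
  have hval : (2 / Real.pi) * (Real.pi / 2) - 0 - (1 - 0) = 0 := by
    field_simp
    ring
  rw [hval] at hfin
  exact hfin

theorem phi_properties :
    let φ : ℝ → ℝ := fun α =>
      (2 / Real.pi) * Real.arctan (Real.sqrt (2 / (Real.pi * α) - 1)) -
        α * Real.sqrt (2 / (Real.pi * α) - 1) - (1 - α)
    (∀ α : ℝ, 0 < α → α < 2 / Real.pi →
        HasDerivAt φ (1 - Real.sqrt (2 / (Real.pi * α) - 1)) α) ∧
    φ (1 / Real.pi) = -(1 / 2) ∧
    (∀ α : ℝ, 0 < α → α < 2 / Real.pi → φ (1 / Real.pi) ≤ φ α) ∧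
    (∀ α : ℝ, 0 < α → α < 2 / Real.pi → φ α < 0) ∧
    Filter.Tendsto φ (nhdsWithin 0 (Set.Ioi 0)) (nhds 0) := by
  intro φ
  have hφ : φ = phA := rfl
  rw [hφ]
  exact ⟨fun α h1 h2 => phA_deriv h1 h2, phA_val, fun α h1 h2 => phA_min h1 h2,
    fun α h1 h2 => phA_neg h1 h2, phA_lim⟩
end

section
/- Let 0 < α < 1 and 0 < γ ≤ 1, and suppose c₁, c₂ are complex numbers with |c₁| ≤ 1 and |c₂| ≤ 1 − |c₁|². Define a₃ = (2γ/(2−α))c₂ + (2(3−α)γ²/((1−α)²(2−α)))c₁². Then |a₃| ≤ 2γ/(2−α) if γ ≤ (1−α)²/(3−α), and |a₃| ≤ 2(3−α)γ²/((1−α)²(2−α)) if (1−α)²/(3−α) ≤ γ ≤ 1. -/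
theorem third_coeff_bound (α γ : ℝ) (hα0 : 0 < α) (hα1 : α < 1)
    (hγ0 : 0 < γ) (hγ1 : γ ≤ 1)
    (c₁ c₂ : ℂ) (hc1 : ‖c₁‖ ≤ 1) (hc2 : ‖c₂‖ ≤ 1 - ‖c₁‖ ^ 2)
    (a₃ : ℂ)
    (ha : a₃ = (2 * γ / (2 - α) : ℝ) * c₂ +
      (2 * (3 - α) * γ ^ 2 / ((1 - α) ^ 2 * (2 - α)) : ℝ) * c₁ ^ 2) :
    (γ ≤ (1 - α) ^ 2 / (3 - α) → ‖a₃‖ ≤ 2 * γ / (2 - α)) ∧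
    ((1 - α) ^ 2 / (3 - α) ≤ γ → ‖a₃‖ ≤ 2 * (3 - α) * γ ^ 2 / ((1 - α) ^ 2 * (2 - α))) := by
  have h2 : (0:ℝ) < 2 - α := by linarith
  have h1 : (0:ℝ) < 1 - α := by linarith
  have h3 : (0:ℝ) < 3 - α := by linarith
  set A : ℝ := 2 * γ / (2 - α) with hA
  set B : ℝ := 2 * (3 - α) * γ ^ 2 / ((1 - α) ^ 2 * (2 - α)) with hB
  have hApos : 0 < A := by rw [hA]; positivity
  have hBpos : 0 < B := by rw [hB]; positivity
  have ht0 : 0 ≤ ‖c₁‖ := norm_nonneg _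
  have key : ‖a₃‖ ≤ A * ‖c₂‖ + B * ‖c₁‖ ^ 2 := by
    rw [ha]
    calc ‖(A:ℂ) * c₂ + (B:ℂ) * c₁ ^ 2‖ ≤ ‖(A:ℂ) * c₂‖ + ‖(B:ℂ) * c₁ ^ 2‖ :=
          norm_add_le _ _
      _ = A * ‖c₂‖ + B * ‖c₁‖ ^ 2 := by
          simp [norm_mul, Complex.norm_real, abs_of_pos hApos, abs_of_pos hBpos, norm_pow]
  have key2 : ‖a₃‖ ≤ A * (1 - ‖c₁‖ ^ 2) + B * ‖c₁‖ ^ 2 := by nlinarith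
  have ht1 : ‖c₁‖ ^ 2 ≤ 1 := by nlinarith
  constructor
  · intro hγ
    have hγ' : γ * (3 - α) ≤ (1 - α) ^ 2 := by
      rw [div_eq_mul_inv] at hγ
      calc γ * (3 - α) ≤ ((1 - α) ^ 2 * (3 - α)⁻¹) * (3 - α) := by
            apply mul_le_mul_of_nonneg_right hγ h3.le
        _ = (1 - α) ^ 2 := by field_simp
    have hBA : B ≤ A := by
      rw [hA, hB, div_le_div_iff₀ (by positivity) h2]
      nlinarith [mul_le_mul_of_nonneg_left hγ' (by positivity : (0:ℝ) ≤ 2 * γ * (2 - α))]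
    nlinarith [sq_nonneg ‖c₁‖]
  · intro hγ
    have hγ' : (1 - α) ^ 2 ≤ γ * (3 - α) := by
      rw [div_le_iff₀ h3] at hγ
      linarith
    have hAB : A ≤ B := by
      rw [hA, hB, div_le_div_iff₀ h2 (by positivity)]
      nlinarith [mul_le_mul_of_nonneg_left hγ' (by positivity : (0:ℝ) ≤ 2 * γ * (2 - α))]
    nlinarith
end
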